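/- (Proposition 1, vanishing weight ratio in the infinite-time limit) If u(0) > 0 and 0 < v_j(0) < (1/2)·log(p/(1-p)) for every j, then for every j the weight ratio α_j(t) = v_j(t)/u(t) is positive for all t ≥ 0 and converges to 0 as t → ∞. -/

import Mathlib

lemma aux_h_pos {p x : ℝ} (hp : 1 / 2 < p) (hp1 : p < 1) :
    x < 1 / 2 * Real.log (p / (1 - p)) ↔ 0 < p * Real.exp (-x) - (1 - p) * Real.exp x := by
  have h1p : 0 < 1 - p := by linarith
  have hpq : 0 < p / (1 - p) := div_pos (by linarith) h1p
  have hex : (0:ℝ) < Real.exp x := Real.exp_pos x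
  have hxx : Real.exp (-x) * Real.exp x = 1 := by rw [← Real.exp_add]; simp
  constructor
  · intro hx
    have h2 : Real.exp (2 * x) < p / (1 - p) := by
      rw [← Real.exp_log hpq]; exact Real.exp_lt_exp.mpr (by linarith)
    rw [two_mul, Real.exp_add, lt_div_iff₀ h1p] at h2
    have h4 : (p * Real.exp (-x) - (1 - p) * Real.exp x) * Real.exp x
        = p - (1 - p) * Real.exp x * Real.exp x := by linear_combination p * hxx
    nlinarith [h2, h4]
  · intro hx
    have h2 : Real.exp x * Real.exp x * (1 - p) < p := by nlinarith [hx, hex, hxx]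
    have h3 : Real.exp (2 * x) < p / (1 - p) := by
      rw [two_mul, Real.exp_add, lt_div_iff₀ h1p]; exact h2
    rw [← Real.exp_log hpq, Real.exp_lt_exp] at h3
    linarith

lemma aux_g_lb {p x : ℝ} (hp : 1 / 2 < p) (hp1 : p < 1) :
    2 * Real.sqrt (p * (1 - p)) ≤ p * Real.exp (-x) + (1 - p) * Real.exp x := by
  have h1p : 0 < 1 - p := by linarith
  have hp0 : (0:ℝ) < p := by linarith
  have ha : (0:ℝ) ≤ p * Real.exp (-x) := by positivity
  have hb : (0:ℝ) ≤ (1 - p) * Real.exp x := by positivity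
  have hab : (p * Real.exp (-x)) * ((1 - p) * Real.exp x) = p * (1 - p) := by
    have hxx : Real.exp (-x) * Real.exp x = 1 := by rw [← Real.exp_add]; simp
    linear_combination p * (1 - p) * hxx
  have hs : Real.sqrt (p * (1 - p)) = Real.sqrt (p * Real.exp (-x)) * Real.sqrt ((1 - p) * Real.exp x) := by
    rw [← Real.sqrt_mul ha, hab]
  rw [hs]
  nlinarith [sq_nonneg (Real.sqrt (p * Real.exp (-x)) - Real.sqrt ((1 - p) * Real.exp x)),
    Real.sq_sqrt ha, Real.sq_sqrt hb]

/-- **Proposition 1, vanishing weight ratio in the infinite-time limit.** -/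
theorem stmt_15
    (D : ℕ) (hD : 0 < D) (p : ℝ) (hp : 1 / 2 < p) (hp1 : p < 1)
    (u : ℝ → ℝ) (v : Fin D → ℝ → ℝ)
    -- gradient-flow system on `[0, ∞)`
    (hu : ∀ t ∈ Set.Ici (0 : ℝ),
      HasDerivWithinAt u
        (Real.exp (-u t) * ∏ i, (p * Real.exp (-v i t) + (1 - p) * Real.exp (v i t)))
        (Set.Ici 0) t)
    (hv : ∀ (j : Fin D), ∀ t ∈ Set.Ici (0 : ℝ),
      HasDerivWithinAt (v j)
        (Real.exp (-u t) * (p * Real.exp (-v j t) - (1 - p) * Real.exp (v j t)) *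
          ∏ i ∈ Finset.univ.erase j,
            (p * Real.exp (-v i t) + (1 - p) * Real.exp (v i t)))
        (Set.Ici 0) t)
    (hu0 : 0 < u 0)
    (hv0 : ∀ j, 0 < v j 0 ∧ v j 0 < (1 / 2) * Real.log (p / (1 - p))) :
    ∀ j, (∀ t ∈ Set.Ici (0 : ℝ), 0 < v j t / u t) ∧
      Filter.Tendsto (fun t => v j t / u t) Filter.atTop (nhds 0) := by
  have h1p : (0:ℝ) < 1 - p := by linarith
  have hp0 : (0:ℝ) < p := by linarith
  -- the conserved quantity `h(v j) * exp u`
  have Hderiv : ∀ j, ∀ t ∈ Set.Ici (0:ℝ),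
      HasDerivWithinAt
        (fun s => (p * Real.exp (-v j s) - (1 - p) * Real.exp (v j s)) * Real.exp (u s))
        0 (Set.Ici 0) t := by
    intro j t ht
    set V' := Real.exp (-u t) * (p * Real.exp (-v j t) - (1 - p) * Real.exp (v j t)) *
        ∏ i ∈ Finset.univ.erase j, (p * Real.exp (-v i t) + (1 - p) * Real.exp (v i t)) with hV'
    set U' := Real.exp (-u t) * ∏ i, (p * Real.exp (-v i t) + (1 - p) * Real.exp (v i t)) with hU'
    have hvj := hv j t ht
    have hut := hu t ht
    have e1 : HasDerivWithinAt (fun s => Real.exp (-v j s)) (Real.exp (-v j t) * (-V'))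
        (Set.Ici 0) t := (Real.hasDerivAt_exp _).comp_hasDerivWithinAt t hvj.neg
    have e2 : HasDerivWithinAt (fun s => Real.exp (v j s)) (Real.exp (v j t) * V')
        (Set.Ici 0) t := (Real.hasDerivAt_exp _).comp_hasDerivWithinAt t hvj
    have e3 : HasDerivWithinAt (fun s => Real.exp (u s)) (Real.exp (u t) * U')
        (Set.Ici 0) t := (Real.hasDerivAt_exp _).comp_hasDerivWithinAt t hut
    have Hd := ((e1.const_mul p).sub (e2.const_mul (1 - p))).mul e3
    have key : (p * (Real.exp (-v j t) * (-V')) - (1 - p) * (Real.exp (v j t) * V')) *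
          Real.exp (u t)
        + (p * Real.exp (-v j t) - (1 - p) * Real.exp (v j t)) * (Real.exp (u t) * U') = 0 := by
      rw [hV', hU', ← Finset.mul_prod_erase Finset.univ _ (Finset.mem_univ j)]
      ring
    simp only [Pi.sub_apply] at Hd
    rw [key] at Hd
    exact Hd
  have Hconst : ∀ j, ∀ t ∈ Set.Ici (0:ℝ),
      (p * Real.exp (-v j t) - (1 - p) * Real.exp (v j t)) * Real.exp (u t)
        = (p * Real.exp (-v j 0) - (1 - p) * Real.exp (v j 0)) * Real.exp (u 0) := by
    intro j t ht
    have hcont : ContinuousOn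
        (fun s => (p * Real.exp (-v j s) - (1 - p) * Real.exp (v j s)) * Real.exp (u s))
        (Set.Icc 0 t) := fun x hx =>
      ((Hderiv j x hx.1).continuousWithinAt).mono Set.Icc_subset_Ici_self
    exact constant_of_has_deriv_right_zero hcont
      (fun x hx => (Hderiv j x hx.1).mono (Set.Ici_subset_Ici.mpr hx.1)) t ⟨ht, le_refl t⟩
  -- positivity of h(v j t)
  have hpos : ∀ j, ∀ t ∈ Set.Ici (0:ℝ),
      0 < p * Real.exp (-v j t) - (1 - p) * Real.exp (v j t) := by
    intro j t ht
    have h0 : 0 < p * Real.exp (-v j 0) - (1 - p) * Real.exp (v j 0) :=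
      (aux_h_pos hp hp1).mp (hv0 j).2
    have hH : 0 < (p * Real.exp (-v j t) - (1 - p) * Real.exp (v j t)) * Real.exp (u t) := by
      rw [Hconst j t ht]; exact mul_pos h0 (Real.exp_pos _)
    rcases mul_pos_iff.mp hH with ⟨h, _⟩ | ⟨_, h⟩
    · exact h
    · linarith [Real.exp_pos (u t)]
  have hvlt : ∀ j, ∀ t ∈ Set.Ici (0:ℝ), v j t < 1 / 2 * Real.log (p / (1 - p)) :=
    fun j t ht => (aux_h_pos hp hp1).mpr (hpos j t ht)
  -- g is positive
  have gpos : ∀ (x : ℝ), 0 < p * Real.exp (-x) + (1 - p) * Real.exp x := by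
    intro x; positivity
  -- u is monotone on Ici 0 and u t ≥ u 0 > 0
  have ucont : ContinuousOn u (Set.Ici 0) := fun x hx => (hu x hx).continuousWithinAt
  have humono : MonotoneOn u (Set.Ici 0) := by
    apply monotoneOn_of_hasDerivWithinAt_nonneg (convex_Ici 0) ucont
      (f' := fun t => Real.exp (-u t) * ∏ i, (p * Real.exp (-v i t) + (1 - p) * Real.exp (v i t)))
    · intro x hx
      rw [interior_Ici] at hx
      rw [interior_Ici]
      exact (hu x (Set.mem_Ici.mpr (le_of_lt hx))).mono Set.Ioi_subset_Ici_self
    · intro x hx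
      rw [interior_Ici] at hx
      have hpr : (0:ℝ) < ∏ i, (p * Real.exp (-v i x) + (1 - p) * Real.exp (v i x)) :=
        Finset.prod_pos (fun i _ => gpos (v i x))
      positivity
  have hupos : ∀ t ∈ Set.Ici (0:ℝ), 0 < u t := fun t ht =>
    lt_of_lt_of_le hu0 (humono Set.self_mem_Ici ht ht)
  -- v j is monotone on Ici 0 and v j t ≥ v j 0 > 0
  have hvmono : ∀ j, MonotoneOn (v j) (Set.Ici 0) := by
    intro j
    apply monotoneOn_of_hasDerivWithinAt_nonneg (convex_Ici 0)
      (fun x hx => (hv j x hx).continuousWithinAt)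
      (f' := fun t => Real.exp (-u t) * (p * Real.exp (-v j t) - (1 - p) * Real.exp (v j t)) *
        ∏ i ∈ Finset.univ.erase j, (p * Real.exp (-v i t) + (1 - p) * Real.exp (v i t)))
    · intro x hx
      rw [interior_Ici] at hx
      rw [interior_Ici]
      exact (hv j x (Set.mem_Ici.mpr (le_of_lt hx))).mono Set.Ioi_subset_Ici_self
    · intro x hx
      rw [interior_Ici] at hx
      have h1 := hpos j x (Set.mem_Ici.mpr (le_of_lt hx))
      have h2 : (0:ℝ) < ∏ i ∈ Finset.univ.erase j,
          (p * Real.exp (-v i x) + (1 - p) * Real.exp (v i x)) :=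
        Finset.prod_pos (fun i _ => gpos (v i x))
      positivity
  have hvpos : ∀ j, ∀ t ∈ Set.Ici (0:ℝ), 0 < v j t := fun j t ht =>
    lt_of_lt_of_le (hv0 j).1 (hvmono j Set.self_mem_Ici ht ht)
  -- u tends to infinity
  set c : ℝ := 2 * Real.sqrt (p * (1 - p)) with hc
  have hcpos : 0 < c := by
    have : 0 < Real.sqrt (p * (1 - p)) := Real.sqrt_pos.mpr (by positivity)
    rw [hc]; linarith
  have hprodlb : ∀ (t : ℝ), c ^ D ≤ ∏ i, (p * Real.exp (-v i t) + (1 - p) * Real.exp (v i t)) := by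
    intro t
    calc c ^ D = ∏ _i : Fin D, c := by rw [Finset.prod_const, Finset.card_univ, Fintype.card_fin]
    _ ≤ _ := Finset.prod_le_prod (fun i _ => le_of_lt hcpos) (fun i _ => aux_g_lb hp hp1)
  have hexpgrow : ∀ t ∈ Set.Ici (0:ℝ), Real.exp (u 0) + c ^ D * t ≤ Real.exp (u t) := by
    have Emono : MonotoneOn (fun s => Real.exp (u s) - c ^ D * s) (Set.Ici 0) := by
      apply monotoneOn_of_hasDerivWithinAt_nonneg (convex_Ici 0)
        (f' := fun t => Real.exp (u t) *
          (Real.exp (-u t) * ∏ i, (p * Real.exp (-v i t) + (1 - p) * Real.exp (v i t))) - c ^ D)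
      · intro x hx
        exact (((Real.continuous_exp.comp_continuousOn ucont).continuousWithinAt hx).sub
          ((continuous_const.mul continuous_id).continuousWithinAt))
      · intro x hx
        rw [interior_Ici] at hx
        rw [interior_Ici]
        have e3 : HasDerivWithinAt (fun s => Real.exp (u s))
            (Real.exp (u x) * (Real.exp (-u x) *
              ∏ i, (p * Real.exp (-v i x) + (1 - p) * Real.exp (v i x)))) (Set.Ici 0) x :=
          (Real.hasDerivAt_exp _).comp_hasDerivWithinAt x (hu x (Set.mem_Ici.mpr (le_of_lt hx)))
        have := e3.sub ((hasDerivAt_id x).const_mul (c ^ D)).hasDerivWithinAt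
        rw [mul_one] at this
        exact this.mono Set.Ioi_subset_Ici_self
      · intro x hx
        rw [interior_Ici] at hx
        have h1 := hprodlb x
        have h2 : Real.exp (u x) * Real.exp (-u x) = 1 := by
          rw [← Real.exp_add]; simp
        calc (0:ℝ) ≤ c ^ D - c ^ D := by ring_nf; exact le_refl 0
        _ ≤ Real.exp (u x) * (Real.exp (-u x) *
            ∏ i, (p * Real.exp (-v i x) + (1 - p) * Real.exp (v i x))) - c ^ D := by
          rw [← mul_assoc, h2, one_mul]; linarith
    intro t ht
    have := Emono Set.self_mem_Ici ht ht
    simp only [mul_zero, sub_zero] at this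
    linarith
  have hu_top : Filter.Tendsto u Filter.atTop Filter.atTop := by
    have hexp_top : Filter.Tendsto (fun t => Real.exp (u t)) Filter.atTop Filter.atTop := by
      apply Filter.tendsto_atTop_mono' Filter.atTop
        (by filter_upwards [Filter.eventually_ge_atTop (0:ℝ)] with t ht
            exact hexpgrow t ht)
      exact Filter.tendsto_atTop_add_const_left _ _
        (Filter.Tendsto.const_mul_atTop (by positivity) Filter.tendsto_id)
    have : Filter.Tendsto (fun t => Real.log (Real.exp (u t))) Filter.atTop Filter.atTop :=
      Real.tendsto_log_atTop.comp hexp_top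
    simpa [Real.log_exp] using this
  -- conclusion
  intro j
  have hvstar_pos : 0 < 1 / 2 * Real.log (p / (1 - p)) := lt_trans (hv0 j).1 (hv0 j).2
  refine ⟨fun t ht => div_pos (hvpos j t ht) (hupos t ht), ?_⟩
  have hub : Filter.Tendsto (fun t => (1 / 2 * Real.log (p / (1 - p))) / u t)
      Filter.atTop (nhds 0) := Filter.Tendsto.div_atTop tendsto_const_nhds hu_top
  apply tendsto_of_tendsto_of_tendsto_of_le_of_le' (tendsto_const_nhds (x := (0:ℝ))) hub
  · filter_upwards [Filter.eventually_ge_atTop (0:ℝ)] with t ht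
    exact le_of_lt (div_pos (hvpos j t ht) (hupos t ht))
  · filter_upwards [Filter.eventually_ge_atTop (0:ℝ)] with t ht
    exact (div_le_div_iff_of_pos_right (hupos t ht)).mpr (le_of_lt (hvlt j t ht))
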